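/- Let Σ be a p×p real symmetric positive definite matrix, μ ∈ ℝ^p, e ∈ ℝ^p the all-ones vector, r_f ∈ ℝ, and set A = μᵀΣ⁻¹μ, B = μᵀΣ⁻¹e, C = eᵀΣ⁻¹e. Then for every w ∈ ℝ^p with eᵀw = 1, one has (wᵀμ − r_f)² ≤ (A − 2B·r_f + C·r_f²)·(wᵀΣw). Moreover, if B − C·r_f ≠ 0, equality holds for the market portfolio w_mkt = Σ⁻¹(μ − r_f·e)/(B − C·r_f); in particular, if additionally A − 2B·r_f + C·r_f² > 0 and B − C·r_f > 0, the market portfolio attains the maximal Sharpe ratio √(A − 2B·r_f + C·r_f²) among all fully invested portfolios. -/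

import Mathlib

open Matrix

lemma posdef_symm_dot {p : ℕ} {M : Matrix (Fin p) (Fin p) ℝ} (hM : M.PosDef)
    (x y : Fin p → ℝ) : x ⬝ᵥ (M *ᵥ y) = y ⬝ᵥ (M *ᵥ x) := by
  have hsym : Mᵀ = M := hM.isHermitian
  rw [dotProduct_mulVec, ← mulVec_transpose, hsym, dotProduct_comm]

lemma posdef_dot_nonneg {p : ℕ} {M : Matrix (Fin p) (Fin p) ℝ} (hM : M.PosDef)
    (x : Fin p → ℝ) : 0 ≤ x ⬝ᵥ (M *ᵥ x) := by
  rcases eq_or_ne x 0 with h | h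
  · simp [h]
  · have := hM.dotProduct_mulVec_pos h
    simpa using this.le

lemma posdef_cauchy {p : ℕ} {M : Matrix (Fin p) (Fin p) ℝ} (hM : M.PosDef)
    (x y : Fin p → ℝ) :
    (x ⬝ᵥ (M *ᵥ y)) ^ 2 ≤ (x ⬝ᵥ (M *ᵥ x)) * (y ⬝ᵥ (M *ᵥ y)) := by
  set c := x ⬝ᵥ (M *ᵥ y) with hc
  set d := y ⬝ᵥ (M *ᵥ y) with hd
  set q := x ⬝ᵥ (M *ᵥ x) with hq
  rcases eq_or_ne y 0 with hy | hy
  · simp [hc, hd, hy]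
  · have hdpos : 0 < d := by simpa [hd] using hM.dotProduct_mulVec_pos hy
    have h0 : 0 ≤ (d • x - c • y) ⬝ᵥ (M *ᵥ (d • x - c • y)) :=
      posdef_dot_nonneg hM _
    have hyx : y ⬝ᵥ (M *ᵥ x) = c := (posdef_symm_dot hM y x).trans hc.symm
    have hexp : (d • x - c • y) ⬝ᵥ (M *ᵥ (d • x - c • y)) =
        d * d * q - 2 * d * c * c + c * c * d := by
      simp only [mulVec_sub, mulVec_smul, sub_dotProduct, dotProduct_sub,
        dotProduct_smul, smul_dotProduct, smul_eq_mul, hyx, ← hc, ← hd, ← hq]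
      ring
    rw [hexp] at h0
    nlinarith

lemma inv_cancel_mulVec {p : ℕ} {M : Matrix (Fin p) (Fin p) ℝ} (hM : M.PosDef)
    (x : Fin p → ℝ) : M *ᵥ (M⁻¹ *ᵥ x) = x := by
  rw [mulVec_mulVec, mul_nonsing_inv _ ((isUnit_iff_isUnit_det _).mp hM.isUnit), one_mulVec]

lemma inv_cancel_mulVec' {p : ℕ} {M : Matrix (Fin p) (Fin p) ℝ} (hM : M.PosDef)
    (x : Fin p → ℝ) : M⁻¹ *ᵥ (M *ᵥ x) = x := by
  rw [mulVec_mulVec, nonsing_inv_mul _ ((isUnit_iff_isUnit_det _).mp hM.isUnit), one_mulVec]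

/-- Sharpe-ratio bound for fully invested portfolios, with equality for the
market (tangency) portfolio, which attains the maximal Sharpe ratio
`√(A − 2B·r_f + C·r_f²)`. -/
theorem sharpe_ratio_bound {p : ℕ}
    (S : Matrix (Fin p) (Fin p) ℝ) (hS : S.PosDef)
    (μ e : Fin p → ℝ) (he : e = fun _ => (1 : ℝ))
    (rf A B C : ℝ)
    (hA : A = μ ⬝ᵥ (S⁻¹ *ᵥ μ))
    (hB : B = μ ⬝ᵥ (S⁻¹ *ᵥ e))
    (hC : C = e ⬝ᵥ (S⁻¹ *ᵥ e)) :
    (∀ w : Fin p → ℝ, e ⬝ᵥ w = 1 →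
      (w ⬝ᵥ μ - rf) ^ 2 ≤ (A - 2 * B * rf + C * rf ^ 2) * (w ⬝ᵥ (S *ᵥ w))) ∧
    (B - C * rf ≠ 0 →
      ∀ wmkt : Fin p → ℝ, wmkt = (B - C * rf)⁻¹ • (S⁻¹ *ᵥ (μ - rf • e)) →
        (wmkt ⬝ᵥ μ - rf) ^ 2 = (A - 2 * B * rf + C * rf ^ 2) * (wmkt ⬝ᵥ (S *ᵥ wmkt))) ∧
    (B - C * rf > 0 → A - 2 * B * rf + C * rf ^ 2 > 0 →
      ∀ wmkt : Fin p → ℝ, wmkt = (B - C * rf)⁻¹ • (S⁻¹ *ᵥ (μ - rf • e)) →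
        (wmkt ⬝ᵥ μ - rf) / Real.sqrt (wmkt ⬝ᵥ (S *ᵥ wmkt)) =
          Real.sqrt (A - 2 * B * rf + C * rf ^ 2) ∧
        ∀ w : Fin p → ℝ, e ⬝ᵥ w = 1 → 0 < w ⬝ᵥ (S *ᵥ w) →
          (w ⬝ᵥ μ - rf) / Real.sqrt (w ⬝ᵥ (S *ᵥ w)) ≤
            Real.sqrt (A - 2 * B * rf + C * rf ^ 2)) := by
  have hSinv : S⁻¹.PosDef := hS.inv
  set v : Fin p → ℝ := μ - rf • e with hv
  set D : ℝ := A - 2 * B * rf + C * rf ^ 2 with hDdef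
  set c : ℝ := B - C * rf with hcdef
  clear_value v D c
  have hBC : e ⬝ᵥ (S⁻¹ *ᵥ μ) = B := (posdef_symm_dot hSinv e μ).trans hB.symm
  -- D equals v ⬝ S⁻¹ v
  have hD : v ⬝ᵥ (S⁻¹ *ᵥ v) = D := by
    simp only [hv, mulVec_sub, mulVec_smul, sub_dotProduct, dotProduct_sub,
      dotProduct_smul, smul_dotProduct, smul_eq_mul, hBC, ← hA, ← hB, ← hC, hDdef]
    ring
  -- Part 1
  have part1 : ∀ w : Fin p → ℝ, e ⬝ᵥ w = 1 →
      (w ⬝ᵥ μ - rf) ^ 2 ≤ D * (w ⬝ᵥ (S *ᵥ w)) := by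
    intro w hw
    have hwv : w ⬝ᵥ v = w ⬝ᵥ μ - rf := by
      have hwe : w ⬝ᵥ e = 1 := (dotProduct_comm w e).trans hw
      simp [hv, dotProduct_sub, dotProduct_smul, smul_eq_mul, hwe]
    have key := posdef_cauchy hSinv (S *ᵥ w) v
    have h1 : (S *ᵥ w) ⬝ᵥ (S⁻¹ *ᵥ v) = w ⬝ᵥ v := by
      rw [posdef_symm_dot hSinv, inv_cancel_mulVec' hS, dotProduct_comm]
    have h2 : (S *ᵥ w) ⬝ᵥ (S⁻¹ *ᵥ (S *ᵥ w)) = w ⬝ᵥ (S *ᵥ w) := by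
      rw [inv_cancel_mulVec' hS, dotProduct_comm, posdef_symm_dot hS]
    rw [h1, h2, hD, hwv] at key
    linarith
  refine ⟨part1, ?_, ?_⟩
  · -- Part 2: equality for market portfolio
    intro hc wmkt hwmkt
    have hSu : S *ᵥ (S⁻¹ *ᵥ v) = v := inv_cancel_mulVec hS v
    have hμu : μ ⬝ᵥ (S⁻¹ *ᵥ v) = A - B * rf := by
      simp only [hv, mulVec_sub, mulVec_smul, dotProduct_sub, dotProduct_smul,
        smul_eq_mul, ← hA, ← hB]
      ring
    have huv : (S⁻¹ *ᵥ v) ⬝ᵥ v = D := by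
      rw [dotProduct_comm, hD]
    have hm1 : wmkt ⬝ᵥ μ = c⁻¹ * (A - B * rf) := by
      rw [hwmkt, smul_dotProduct, smul_eq_mul, dotProduct_comm, hμu]
    have hm2 : wmkt ⬝ᵥ (S *ᵥ wmkt) = c⁻¹ * c⁻¹ * D := by
      rw [hwmkt, mulVec_smul, dotProduct_smul, smul_dotProduct, smul_eq_mul,
        smul_eq_mul, hSu, huv]
      ring
    have hshift : wmkt ⬝ᵥ μ - rf = c⁻¹ * D := by
      rw [hm1]
      rw [hcdef] at hc
      rw [hcdef, hDdef]
      field_simp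
      ring
    rw [hshift, hm2]
    ring
  · -- Part 3
    intro hcpos hDpos wmkt hwmkt
    have hc : c ≠ 0 := ne_of_gt hcpos
    have hSu : S *ᵥ (S⁻¹ *ᵥ v) = v := inv_cancel_mulVec hS v
    have hμu : μ ⬝ᵥ (S⁻¹ *ᵥ v) = A - B * rf := by
      simp only [hv, mulVec_sub, mulVec_smul, dotProduct_sub, dotProduct_smul,
        smul_eq_mul, ← hA, ← hB]
      ring
    have huv : (S⁻¹ *ᵥ v) ⬝ᵥ v = D := by
      rw [dotProduct_comm, hD]
    have hm2 : wmkt ⬝ᵥ (S *ᵥ wmkt) = D / c ^ 2 := by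
      rw [hwmkt, mulVec_smul, dotProduct_smul, smul_dotProduct, smul_eq_mul,
        smul_eq_mul, hSu, huv]
      ring
    have hshift : wmkt ⬝ᵥ μ - rf = D / c := by
      rw [hwmkt, smul_dotProduct, smul_eq_mul, dotProduct_comm, hμu]
      have hc2 : B - C * rf ≠ 0 := by rw [← hcdef]; exact hc
      rw [hcdef, hDdef]
      field_simp
      ring
    constructor
    · rw [hm2, hshift]
      have hsq : Real.sqrt (D / c ^ 2) = Real.sqrt D / c := by
        rw [Real.sqrt_div hDpos.le, Real.sqrt_sq hcpos.le]
      rw [hsq]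
      have h1 : Real.sqrt D ≠ 0 := ne_of_gt (Real.sqrt_pos.2 hDpos)
      field_simp
      rw [Real.sq_sqrt hDpos.le]
    · intro w hw hq
      have hb := part1 w hw
      have hx : w ⬝ᵥ μ - rf ≤ Real.sqrt D * Real.sqrt (w ⬝ᵥ (S *ᵥ w)) := by
        calc w ⬝ᵥ μ - rf ≤ |w ⬝ᵥ μ - rf| := le_abs_self _
          _ = Real.sqrt ((w ⬝ᵥ μ - rf) ^ 2) := (Real.sqrt_sq_eq_abs _).symm
          _ ≤ Real.sqrt (D * (w ⬝ᵥ (S *ᵥ w))) := Real.sqrt_le_sqrt hb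
          _ = Real.sqrt D * Real.sqrt (w ⬝ᵥ (S *ᵥ w)) := Real.sqrt_mul hDpos.le _
      rw [div_le_iff₀ (Real.sqrt_pos.2 hq)]
      exact hx
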